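/- Let f : ℝ^m → ℝ be continuously differentiable and strongly pairwise monotonic with respect to feature β over feature γ (β ≠ γ). Then Integrated Gradients preserves average strong pairwise monotonicity: for every baseline x' ∈ ℝ^m and explicand x ∈ ℝ^m with x_β > x'_β and x_γ > x'_γ, one has IG_β(x, x', f)/(x_β − x'_β) ≥ IG_γ(x, x', f)/(x_γ − x'_γ). -/

import Mathlib

/-- The Integrated Gradients attribution of feature `i` at explicand `x` with baseline `x'`
for a model `f`: `IG_i(x, x', f) = (x_i − x'_i) · ∫_0^1 (∂f/∂x_i)(x' + t(x − x')) dt`. -/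
noncomputable def IG (m : ℕ) (f : (Fin m → ℝ) → ℝ) (x x' : Fin m → ℝ) (i : Fin m) : ℝ :=
  (x i - x' i) * ∫ t in (0:ℝ)..1,
    deriv (fun s : ℝ => f (Function.update (x' + t • (x - x')) i s)) ((x' + t • (x - x')) i)

section aux

variable {m : ℕ} {f : (Fin m → ℝ) → ℝ}

lemma aux_hasDerivAt (hf : ContDiff ℝ 1 f) (z : Fin m → ℝ) (i : Fin m) (s : ℝ) :
    HasDerivAt (fun s : ℝ => f (Function.update z i s))
      ((fderiv ℝ f (Function.update z i s)) (Pi.single i 1)) s := by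
  have h1 : HasDerivAt (Function.update z i) (Pi.single i (1:ℝ)) s := hasDerivAt_update z i s
  have h2 : HasFDerivAt f (fderiv ℝ f (Function.update z i s)) (Function.update z i s) :=
    (hf.differentiable one_ne_zero (Function.update z i s)).hasFDerivAt
  exact h2.comp_hasDerivAt s h1

lemma aux_deriv (hf : ContDiff ℝ 1 f) (z : Fin m → ℝ) (i : Fin m) :
    deriv (fun s : ℝ => f (Function.update z i s)) (z i)
      = (fderiv ℝ f z) (Pi.single i 1) := by
  have := (aux_hasDerivAt hf z i (z i)).deriv
  rwa [Function.update_eq_self] at this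

lemma aux_key (hf : ContDiff ℝ 1 f) {β γ : Fin m}
    (hmono : ∀ (x : Fin m → ℝ) (c : ℝ), 0 < c →
      f (Function.update x γ (x γ + c)) ≤ f (Function.update x β (x β + c)))
    (z : Fin m → ℝ) :
    (fderiv ℝ f z) (Pi.single γ 1) ≤ (fderiv ℝ f z) (Pi.single β 1) := by
  set h : ℝ → ℝ := fun c => f (Function.update z β (z β + c)) - f (Function.update z γ (z γ + c))
  have hdβ : HasDerivAt (fun c : ℝ => f (Function.update z β (z β + c)))
      ((fderiv ℝ f z) (Pi.single β 1)) 0 := by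
    have := aux_hasDerivAt hf z β (z β)
    rw [Function.update_eq_self] at this
    have h1 : HasDerivAt (fun c : ℝ => z β + c) (1:ℝ) 0 :=
      (hasDerivAt_id (0:ℝ)).const_add (z β)
    have this' : HasDerivAt (fun s : ℝ => f (Function.update z β s))
        ((fderiv ℝ f z) (Pi.single β 1)) ((fun c : ℝ => z β + c) 0) := by
      simpa using this
    simpa [Function.comp_def] using this'.comp 0 h1
  have hdγ : HasDerivAt (fun c : ℝ => f (Function.update z γ (z γ + c)))
      ((fderiv ℝ f z) (Pi.single γ 1)) 0 := by
    have := aux_hasDerivAt hf z γ (z γ)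
    rw [Function.update_eq_self] at this
    have h1 : HasDerivAt (fun c : ℝ => z γ + c) (1:ℝ) 0 :=
      (hasDerivAt_id (0:ℝ)).const_add (z γ)
    have this' : HasDerivAt (fun s : ℝ => f (Function.update z γ s))
        ((fderiv ℝ f z) (Pi.single γ 1)) ((fun c : ℝ => z γ + c) 0) := by
      simpa using this
    simpa [Function.comp_def] using this'.comp 0 h1
  have hdh : HasDerivAt h ((fderiv ℝ f z) (Pi.single β 1) - (fderiv ℝ f z) (Pi.single γ 1)) 0 :=
    hdβ.sub hdγ
  have h0 : h 0 = 0 := by simp [h]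
  have hslope := hasDerivAt_iff_tendsto_slope.mp hdh
  have hslope' : Filter.Tendsto (slope h 0) (nhdsWithin 0 (Set.Ioi 0))
      (nhds ((fderiv ℝ f z) (Pi.single β 1) - (fderiv ℝ f z) (Pi.single γ 1))) :=
    hslope.mono_left (nhdsWithin_mono 0 (fun c hc => ne_of_gt hc))
  have hnn : 0 ≤ (fderiv ℝ f z) (Pi.single β 1) - (fderiv ℝ f z) (Pi.single γ 1) := by
    refine ge_of_tendsto hslope' ?_
    filter_upwards [self_mem_nhdsWithin] with c (hc : 0 < c)
    have : 0 ≤ h c := sub_nonneg.mpr (hmono z c hc)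
    rw [slope_def_field, h0]
    simpa using div_nonneg this hc.le
  linarith
end aux

theorem ig_preserves_average_strong_pairwise_monotonicity
    (m : ℕ) (f : (Fin m → ℝ) → ℝ) (β γ : Fin m) (hβγ : β ≠ γ)
    (hf : ContDiff ℝ 1 f)
    (hmono : ∀ (x : Fin m → ℝ) (c : ℝ), 0 < c →
      f (Function.update x γ (x γ + c)) ≤ f (Function.update x β (x β + c)))
    (x x' : Fin m → ℝ) (hβ : x' β < x β) (hγ : x' γ < x γ) :
    IG m f x x' γ / (x γ - x' γ) ≤ IG m f x x' β / (x β - x' β) := by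
  have hpath : Continuous (fun t : ℝ => x' + t • (x - x')) := by fun_prop
  have hcont : ∀ i : Fin m, Continuous
      (fun t : ℝ => (fderiv ℝ f (x' + t • (x - x'))) (Pi.single i 1)) := fun i =>
    ((hf.continuous_fderiv one_ne_zero).comp hpath).clm_apply continuous_const
  have hIG : ∀ i : Fin m, IG m f x x' i
      = (x i - x' i) * ∫ t in (0:ℝ)..1, (fderiv ℝ f (x' + t • (x - x'))) (Pi.single i 1) := by
    intro i
    unfold IG
    congr 1
    refine intervalIntegral.integral_congr fun t _ => ?_
    exact aux_deriv hf (x' + t • (x - x')) i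
  rw [hIG β, hIG γ, mul_div_cancel_left₀ _ (by linarith : x β - x' β ≠ 0),
    mul_div_cancel_left₀ _ (by linarith : x γ - x' γ ≠ 0)]
  refine intervalIntegral.integral_mono_on (by norm_num) ?_ ?_ ?_
  · exact (hcont γ).intervalIntegrable 0 1
  · exact (hcont β).intervalIntegrable 0 1
  · exact fun t _ => aux_key hf hmono (x' + t • (x - x'))
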